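/- Let β > 0, θ ∈ ℝ, and n_θ = (cos θ, sin θ) ∈ ℝ². For any x̂ ∈ ℝ² and θ̂ ∈ ℝ, the supremum over all pairs (a, b) with 0 ≤ b ≤ a ≤ 1 of the quantity (max(a·⟨x̂, n_θ⟩ + b·θ̂/β, 0))² equals max{ (max(⟨x̂, n_θ⟩ + θ̂/β, 0))², (max(⟨x̂, n_θ⟩, 0))² }. Consequently, the Hamiltonian of the convexity-constrained Dubins metric is 2𝕳(x̂, θ̂) = max{⟨(x̂,θ̂), q₊⟩₊², ⟨x̂, n_θ⟩₊²}, where q₊ = (n_θ, 1/β). -/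
import Mathlib


open Real

/-- The Hamiltonian of the convexity-constrained Dubins metric: the supremum
over the triangle `{(a,b) | 0 ≤ b ≤ a ≤ 1}` of `(a·⟨x̂,n_θ⟩ + b·θ̂/β)₊²`
equals `max{(⟨x̂,n_θ⟩ + θ̂/β)₊², ⟨x̂,n_θ⟩₊²}`. -/
theorem stmt_2 (β θ : ℝ) (hβ : 0 < β) (xhat : ℝ × ℝ) (θhat : ℝ) :
    IsLUB {v : ℝ | ∃ a b : ℝ, 0 ≤ b ∧ b ≤ a ∧ a ≤ 1 ∧
        v = (max (a * (xhat.1 * Real.cos θ + xhat.2 * Real.sin θ)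
              + b * (θhat / β)) 0)^2}
      (max ((max ((xhat.1 * Real.cos θ + xhat.2 * Real.sin θ) + θhat / β) 0)^2)
           ((max (xhat.1 * Real.cos θ + xhat.2 * Real.sin θ) 0)^2)) := by
  set c := xhat.1 * Real.cos θ + xhat.2 * Real.sin θ with hc
  set d := θhat / β with hd
  set M : ℝ := max (max (c + d) 0) (max c 0) with hM
  have hM0 : 0 ≤ M := le_trans (le_max_right _ 0) (le_max_left _ _)
  have hsq : max ((max (c + d) 0)^2) ((max c 0)^2) = M^2 := by
    rcases le_total (max (c + d) 0) (max c 0) with h | h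
    · rw [max_eq_right (pow_le_pow_left₀ (le_max_right _ 0) h 2), hM,
        max_eq_right h]
    · rw [max_eq_left (pow_le_pow_left₀ (le_max_right _ 0) h 2), hM,
        max_eq_left h]
  rw [hsq]
  constructor
  · rintro v ⟨a, b, hb, hba, ha1, rfl⟩
    apply pow_le_pow_left₀ (le_max_right _ 0)
    apply max_le _ hM0
    have h1 : c + d ≤ M := le_trans (le_max_left _ 0) (le_max_left _ _)
    have h2 : c ≤ M := le_trans (le_max_left _ 0) (le_max_right _ _)
    calc a * c + b * d = b * (c + d) + (a - b) * c := by ring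
      _ ≤ b * M + (a - b) * M := by
          apply add_le_add
          · exact mul_le_mul_of_nonneg_left h1 hb
          · exact mul_le_mul_of_nonneg_left h2 (by linarith)
      _ = a * M := by ring
      _ ≤ 1 * M := mul_le_mul_of_nonneg_right ha1 hM0
      _ = M := one_mul M
  · intro ub hub
    rcases le_total (max (c + d) 0) (max c 0) with h | h
    · rw [hM, max_eq_right h]
      exact hub ⟨1, 0, le_refl 0, zero_le_one, le_refl 1, by ring_nf⟩
    · rw [hM, max_eq_left h]
      exact hub ⟨1, 1, zero_le_one, le_refl 1, le_refl 1, by ring_nf⟩
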